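/- Fix p ∈ (0,1). For every y ∈ (0,1) one has I(y) ≥ 𝓘(y), with equality if and only if y = p. -/

import Mathlib

/-- The AMS rate function `I` with parameter `p`, defined on `(0,1)`. -/
noncomputable def amsRate (p y : ℝ) : ℝ :=
  Real.log y * Real.log (Real.log p / Real.log y) + Real.log (y / p)

/-- The Cramér rate function of the Bernoulli(p) distribution on `(0,1)`. -/
noncomputable def cramerRate (p y : ℝ) : ℝ :=
  y * Real.log (y / p) + (1 - y) * Real.log ((1 - y) / (1 - p))

/-- Auxiliary function: the difference `amsRate − cramerRate`, viewed as a function of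
`b = -log p`, with `y` fixed (`A = -log y`). -/
noncomputable def auxF (y b : ℝ) : ℝ :=
  (-Real.log y) * (Real.log (-Real.log y) - Real.log b) + (1 - y) * (b - (-Real.log y))
    - (1 - y) * (Real.log (1 - y) - Real.log (1 - Real.exp (-b)))

/-- Strict monotonicity of `(1 - e^{-t})/t`: for `0 < s < t`,
`s (1 - e^{-t}) < t (1 - e^{-s})`. -/
lemma aux_psi {s t : ℝ} (hs : 0 < s) (hst : s < t) :
    s * (1 - Real.exp (-t)) < t * (1 - Real.exp (-s)) := by
  have ht : 0 < t := hs.trans hst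
  have hne : (0 : ℝ) ≠ -t := by
    intro h; nlinarith
  have hb : 0 < s / t := div_pos hs ht
  have ha : 0 < 1 - s / t := by
    have : s / t < 1 := (div_lt_one ht).2 hst
    linarith
  have h := strictConvexOn_exp.2 (Set.mem_univ (0 : ℝ)) (Set.mem_univ (-t)) hne ha hb
    (by ring)
  simp only [smul_eq_mul, mul_zero, zero_add, Real.exp_zero, mul_one] at h
  have h2 : Real.exp (s / t * -t) = Real.exp (-s) := by
    congr 1; field_simp
  rw [h2] at h
  have := mul_lt_mul_of_pos_left h ht
  have htne : t ≠ 0 := ht.ne'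
  have hexpand : t * (1 - s / t + s / t * Real.exp (-t)) = t - s + s * Real.exp (-t) := by
    field_simp
  nlinarith [this]

lemma aux_hasDerivAt {y b : ℝ} (hy : y ∈ Set.Ioo (0 : ℝ) 1) (hb : 0 < b) :
    HasDerivAt (auxF y) ((1 - y) / (1 - Real.exp (-b)) - (-Real.log y) / b) b := by
  have hq1 : Real.exp (-b) < 1 := by
    rw [Real.exp_lt_one_iff]; linarith
  have hq0 : (0 : ℝ) < Real.exp (-b) := Real.exp_pos _
  have h1 : HasDerivAt (fun b : ℝ => Real.exp (-b)) (-Real.exp (-b)) b := by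
    simpa [Function.comp_def] using (Real.hasDerivAt_exp (-b)).comp b (hasDerivAt_neg b)
  have h2 : HasDerivAt (fun b : ℝ => 1 - Real.exp (-b)) (Real.exp (-b)) b := by
    simpa [Pi.sub_def] using (hasDerivAt_const b (1 : ℝ)).sub h1
  have h3 : HasDerivAt (fun b : ℝ => Real.log (1 - Real.exp (-b)))
      (Real.exp (-b) / (1 - Real.exp (-b))) b := h2.log (by linarith)
  have h4 : HasDerivAt (fun b : ℝ =>
      (-Real.log y) * (Real.log (-Real.log y) - Real.log b)) ((-Real.log y) * (0 - b⁻¹)) b :=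
    (((hasDerivAt_const b (Real.log (-Real.log y)))).sub
      (Real.hasDerivAt_log hb.ne')).const_mul _
  have h5 : HasDerivAt (fun b : ℝ => (1 - y) * (b - (-Real.log y))) ((1 - y) * (1 - 0)) b :=
    ((hasDerivAt_id b).sub (hasDerivAt_const b _)).const_mul _
  have h6 : HasDerivAt (fun b : ℝ =>
      (1 - y) * (Real.log (1 - y) - Real.log (1 - Real.exp (-b))))
      ((1 - y) * (0 - Real.exp (-b) / (1 - Real.exp (-b)))) b :=
    ((hasDerivAt_const b (Real.log (1 - y))).sub h3).const_mul _
  have h := (h4.add h5).sub h6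
  refine HasDerivAt.congr_deriv h ?_
  have hd : (1 : ℝ) - Real.exp (-b) ≠ 0 := by linarith
  field_simp
  ring

lemma aux_deriv {y b : ℝ} (hy : y ∈ Set.Ioo (0 : ℝ) 1) (hb : 0 < b) :
    deriv (auxF y) b = (1 - y) / (1 - Real.exp (-b)) - (-Real.log y) / b :=
  (aux_hasDerivAt hy hb).deriv

lemma aux_cont {y : ℝ} (hy : y ∈ Set.Ioo (0 : ℝ) 1) {s : Set ℝ} (hs : ∀ x ∈ s, 0 < x) :
    ContinuousOn (auxF y) s := fun x hx =>
  ((aux_hasDerivAt hy (hs x hx)).continuousAt).continuousWithinAt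

lemma aux_zero {y : ℝ} (hy : y ∈ Set.Ioo (0 : ℝ) 1) : auxF y (-Real.log y) = 0 := by
  have h : Real.exp (-(-Real.log y)) = y := by
    rw [neg_neg, Real.exp_log hy.1]
  simp [auxF, h, Real.exp_log hy.1]

lemma aux_A_pos {y : ℝ} (hy : y ∈ Set.Ioo (0 : ℝ) 1) : 0 < -Real.log y := by
  have := Real.log_neg hy.1 hy.2
  linarith

/-- `auxF y b > 0` for `b > 0`, `b ≠ -log y`. -/
lemma aux_pos {y b : ℝ} (hy : y ∈ Set.Ioo (0 : ℝ) 1) (hb : 0 < b)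
    (hne : b ≠ -Real.log y) : 0 < auxF y b := by
  set A := -Real.log y with hA
  have hApos : 0 < A := aux_A_pos hy
  have hyA : Real.exp (-A) = y := by rw [hA, neg_neg, Real.exp_log hy.1]
  rcases lt_or_gt_of_ne hne with hlt | hgt
  · -- b < A : auxF strictly decreasing on [b, A]
    have hanti : StrictAntiOn (auxF y) (Set.Icc b A) := by
      apply strictAntiOn_of_deriv_neg (convex_Icc _ _)
        (aux_cont hy (fun x hx => lt_of_lt_of_le hb hx.1))
      intro x hx
      rw [interior_Icc] at hx
      have hx0 : 0 < x := hb.trans hx.1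
      rw [aux_deriv hy hx0]
      have hkey : x * (1 - Real.exp (-A)) < A * (1 - Real.exp (-x)) :=
        aux_psi hx0 hx.2
      rw [hyA] at hkey
      have hq1 : 0 < 1 - Real.exp (-x) := by
        have : Real.exp (-x) < 1 := by rw [Real.exp_lt_one_iff]; linarith
        linarith
      rw [sub_neg, div_lt_div_iff₀ hq1 hx0]
      nlinarith
    have := hanti (Set.left_mem_Icc.2 hlt.le) (Set.right_mem_Icc.2 hlt.le) hlt
    rw [aux_zero hy] at this
    exact this
  · -- A < b : auxF strictly increasing on [A, b]
    have hmono : StrictMonoOn (auxF y) (Set.Icc A b) := by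
      apply strictMonoOn_of_deriv_pos (convex_Icc _ _)
        (aux_cont hy (fun x hx => lt_of_lt_of_le hApos hx.1))
      intro x hx
      rw [interior_Icc] at hx
      have hx0 : 0 < x := hApos.trans hx.1
      rw [aux_deriv hy hx0]
      have hkey : A * (1 - Real.exp (-x)) < x * (1 - Real.exp (-A)) :=
        aux_psi hApos hx.1
      rw [hyA] at hkey
      have hq1 : 0 < 1 - Real.exp (-x) := by
        have : Real.exp (-x) < 1 := by rw [Real.exp_lt_one_iff]; linarith
        linarith
      rw [sub_pos, div_lt_div_iff₀ hx0 hq1]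
      nlinarith
    have := hmono (Set.left_mem_Icc.2 hgt.le) (Set.right_mem_Icc.2 hgt.le) hgt
    rw [aux_zero hy] at this
    exact this

lemma aux_eq {p y : ℝ} (hp : p ∈ Set.Ioo (0 : ℝ) 1) (hy : y ∈ Set.Ioo (0 : ℝ) 1) :
    amsRate p y = cramerRate p y + auxF y (-Real.log p) := by
  have hBpos : 0 < -Real.log p := aux_A_pos hp
  have hApos : 0 < -Real.log y := aux_A_pos hy
  have hpexp : Real.exp (-(-Real.log p)) = p := by rw [neg_neg, Real.exp_log hp.1]
  have h1 : Real.log p / Real.log y = (-Real.log p) / (-Real.log y) := by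
    rw [neg_div_neg_eq]
  have h2 : Real.log (Real.log p / Real.log y)
      = Real.log (-Real.log p) - Real.log (-Real.log y) := by
    rw [h1, Real.log_div hBpos.ne' hApos.ne']
  have h3 : Real.log (y / p) = Real.log y - Real.log p :=
    Real.log_div hy.1.ne' hp.1.ne'
  have h4 : Real.log ((1 - y) / (1 - p)) = Real.log (1 - y) - Real.log (1 - p) :=
    Real.log_div (by linarith [hy.2]) (by linarith [hp.2])
  rw [amsRate, cramerRate, auxF, h2, h3, h4, hpexp]
  ring

/-- For every `y ∈ (0,1)`, `I(y) ≥ 𝓘(y)`, with equality iff `y = p`. -/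
theorem amsRate_ge_cramerRate (p : ℝ) (hp : p ∈ Set.Ioo (0 : ℝ) 1) :
    ∀ y ∈ Set.Ioo (0 : ℝ) 1,
      cramerRate p y ≤ amsRate p y ∧ (amsRate p y = cramerRate p y ↔ y = p) := by
  intro y hy
  have hEq := aux_eq hp hy
  have hBpos : 0 < -Real.log p := aux_A_pos hp
  by_cases hcase : -Real.log p = -Real.log y
  · have hyp : y = p := by
      have : Real.log p = Real.log y := by linarith
      calc y = Real.exp (Real.log y) := (Real.exp_log hy.1).symm
        _ = Real.exp (Real.log p) := by rw [this]
        _ = p := Real.exp_log hp.1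
    have h0 : auxF y (-Real.log p) = 0 := by rw [hcase, aux_zero hy]
    rw [hEq, h0]
    constructor
    · linarith
    · simp [hyp]
  · have hpos : 0 < auxF y (-Real.log p) := aux_pos hy hBpos hcase
    constructor
    · linarith
    · constructor
      · intro h; exfalso; linarith
      · intro h
        exfalso
        apply hcase
        rw [h]
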